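/- arXiv:2107.00916 — 6 statements merged into one kernel-verified Lean document; each statement's English description precedes it below -/
import Mathlib

section
/- The fractional chromatic number of the square of the 8-cycle C_8^2 (the graph on vertices v_1,...,v_8 where v_i is adjacent to v_{i±1} and v_{i±2} mod 8) equals 4. -/
open SimpleGraph

/-- The fractional chromatic number, as the infimum of `a/b` over all `(a:b)`-colorings. -/
noncomputable def fracChrom {V : Type*} (G : SimpleGraph V) : ℝ :=
  sInf {r : ℝ | ∃ a b : ℕ, 0 < b ∧
    (∃ ψ : V → Finset (Fin a), (∀ v, b ≤ (ψ v).card) ∧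
      ∀ u v, G.Adj u v → Disjoint (ψ u) (ψ v)) ∧ r = a / b}

/-- The square of the 8-cycle. -/
def C8sq : SimpleGraph (ZMod 8) := SimpleGraph.circulantGraph ({1, 2} : Set (ZMod 8))

instance : DecidablePred (· ∈ ({1, 2} : Set (ZMod 8))) := fun x =>
  decidable_of_iff (x = 1 ∨ x = 2) (by simp)

instance : DecidableRel C8sq.Adj :=
  inferInstanceAs (DecidableRel (SimpleGraph.circulantGraph ({1, 2} : Set (ZMod 8))).Adj)

/-- The strong product of two simple graphs. -/
def strongProd {α β : Type*} (G : SimpleGraph α) (H : SimpleGraph β) :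
    SimpleGraph (α × β) where
  Adj x y := x ≠ y ∧ (x.1 = y.1 ∨ G.Adj x.1 y.1) ∧ (x.2 = y.2 ∨ H.Adj x.2 y.2)
  symm := ⟨fun x y h => ⟨h.1.symm, h.2.1.imp Eq.symm (fun a => G.adj_symm a),
    h.2.2.imp Eq.symm (fun a => H.adj_symm a)⟩⟩
  loopless := ⟨fun x h => h.1 rfl⟩

instance {α β : Type*} [DecidableEq α] [DecidableEq β] (G : SimpleGraph α) (H : SimpleGraph β)
    [DecidableRel G.Adj] [DecidableRel H.Adj] : DecidableRel (strongProd G H).Adj :=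
  fun x y => inferInstanceAs
    (Decidable (x ≠ y ∧ (x.1 = y.1 ∨ G.Adj x.1 y.1) ∧ (x.2 = y.2 ∨ H.Adj x.2 y.2)))

/-- The strong product `C₅ ⊠ K₂`. -/
def C5K2 : SimpleGraph (Fin 5 × Fin 2) :=
  strongProd (SimpleGraph.cycleGraph 5) (⊤ : SimpleGraph (Fin 2))

/-- The independence number of a graph. -/
noncomputable def indepNum {V : Type*} (G : SimpleGraph V) : ℕ :=
  sSup {n | ∃ s : Finset V, s.card = n ∧ ∀ u ∈ s, ∀ v ∈ s, ¬G.Adj u v}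

set_option maxRecDepth 4000 in
lemma C8sq_indep_le_two :
    ∀ s : Finset (ZMod 8), (∀ u ∈ s, ∀ v ∈ s, ¬ C8sq.Adj u v) → s.card ≤ 2 := by
  decide

lemma C8sq_color : ∀ u v, C8sq.Adj u v →
    Disjoint ({(Fin.ofNat 4 u.val)} : Finset (Fin 4)) ({(Fin.ofNat 4 v.val)} : Finset (Fin 4)) := by
  decide

/-- The fractional chromatic number of `C₈²` equals 4. -/
theorem fracChrom_C8sq : fracChrom C8sq = 4 := by
  have h4mem : (4 : ℝ) ∈ {r : ℝ | ∃ a b : ℕ, 0 < b ∧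
      (∃ ψ : ZMod 8 → Finset (Fin a), (∀ v, b ≤ (ψ v).card) ∧
        ∀ u v, C8sq.Adj u v → Disjoint (ψ u) (ψ v)) ∧ r = a / b} := by
    refine ⟨4, 1, one_pos, ⟨fun v => {(Fin.ofNat 4 v.val)}, fun v => by simp, C8sq_color⟩, by norm_num⟩
  have hlb : ∀ r ∈ {r : ℝ | ∃ a b : ℕ, 0 < b ∧
      (∃ ψ : ZMod 8 → Finset (Fin a), (∀ v, b ≤ (ψ v).card) ∧
        ∀ u v, C8sq.Adj u v → Disjoint (ψ u) (ψ v)) ∧ r = a / b}, (4 : ℝ) ≤ r := by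
    rintro r ⟨a, b, hb, ⟨ψ, hcard, hdisj⟩, rfl⟩
    have key : 8 * b ≤ 2 * a := by
      have h1 : ∑ _v : ZMod 8, b ≤ ∑ v : ZMod 8, (ψ v).card :=
        Finset.sum_le_sum (fun v _ => hcard v)
      have hcv : ∀ v : ZMod 8, (ψ v).card = ∑ c : Fin a, if c ∈ ψ v then 1 else 0 := by
        intro v
        rw [← Finset.card_filter]
        congr 1
        ext c
        simp
      have h2 : ∑ v : ZMod 8, (ψ v).card
          = ∑ c : Fin a, (Finset.univ.filter (fun v : ZMod 8 => c ∈ ψ v)).card := by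
        simp only [hcv, Finset.card_filter]
        rw [Finset.sum_comm]
      have h3 : ∀ c : Fin a, (Finset.univ.filter (fun v : ZMod 8 => c ∈ ψ v)).card ≤ 2 := by
        intro c
        apply C8sq_indep_le_two
        intro u hu v hv hadj
        simp only [Finset.mem_filter] at hu hv
        exact (Finset.disjoint_left.mp (hdisj u v hadj)) hu.2 hv.2
      have h4 : ∑ c : Fin a, (Finset.univ.filter (fun v : ZMod 8 => c ∈ ψ v)).card
          ≤ ∑ _c : Fin a, 2 := Finset.sum_le_sum (fun c _ => h3 c)
      have h5 : ∑ _v : ZMod 8, b = 8 * b := by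
        simp [Finset.sum_const, Finset.card_univ, mul_comm]
      have h6 : ∑ _c : Fin a, 2 = 2 * a := by
        simp [Finset.sum_const, mul_comm]
      calc 8 * b = ∑ _v : ZMod 8, b := h5.symm
        _ ≤ ∑ v : ZMod 8, (ψ v).card := h1
        _ = _ := h2
        _ ≤ ∑ _c : Fin a, 2 := h4
        _ = 2 * a := h6
    have hb' : (0 : ℝ) < b := by exact_mod_cast hb
    rw [le_div_iff₀ hb']
    have hk : (8 : ℝ) * b ≤ 2 * a := by exact_mod_cast key
    linarith
  rw [fracChrom]
  refine le_antisymm (csInf_le ⟨4, hlb⟩ h4mem) (le_csInf ⟨4, h4mem⟩ hlb)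
end

section
/- For a vertex-transitive finite graph G, the fractional chromatic number equals |V(G)|/α(G), where α(G) is the independence number. -/
open SimpleGraph

section AuxIndep
variable {V : Type*} [Fintype V] (G : SimpleGraph V)

lemma indepSet_bddAbove :
    BddAbove {n | ∃ s : Finset V, s.card = n ∧ ∀ u ∈ s, ∀ v ∈ s, ¬G.Adj u v} :=
  ⟨Fintype.card V, fun _ ⟨s, hs, _⟩ => hs ▸ s.card_le_univ⟩

lemma exists_max_indep :
    ∃ S : Finset V, S.card = _root_.indepNum G ∧ ∀ u ∈ S, ∀ v ∈ S, ¬G.Adj u v := by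
  have hne : {n | ∃ s : Finset V, s.card = n ∧ ∀ u ∈ s, ∀ v ∈ s, ¬G.Adj u v}.Nonempty :=
    ⟨0, ∅, by simp⟩
  obtain ⟨s, hs, hind⟩ := Nat.sSup_mem hne (indepSet_bddAbove G)
  exact ⟨s, hs, hind⟩

lemma indep_card_le {s : Finset V} (h : ∀ u ∈ s, ∀ v ∈ s, ¬G.Adj u v) :
    s.card ≤ _root_.indepNum G :=
  le_csSup (indepSet_bddAbove G) ⟨s, rfl, h⟩

lemma indepNum_pos [Nonempty V] : 0 < _root_.indepNum G := by
  obtain ⟨v⟩ := (inferInstance : Nonempty V)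
  have hind : ∀ u ∈ ({v} : Finset V), ∀ w ∈ ({v} : Finset V), ¬G.Adj u w := by
    intro u hu w hw
    simp only [Finset.mem_singleton] at hu hw
    rw [hu, hw]; exact G.loopless.irrefl v
  have h1 := indep_card_le G hind
  simpa using lt_of_lt_of_le (by norm_num) h1

end AuxIndep

/-- For a vertex-transitive finite graph, `χ_f(G) = |V(G)| / α(G)`. -/
theorem fracChrom_vertexTransitive {V : Type*} [Fintype V] [Nonempty V]
    (G : SimpleGraph V) (ht : ∀ u v : V, ∃ φ : G ≃g G, φ u = v) :
    fracChrom G = (Fintype.card V : ℝ) / (_root_.indepNum G : ℝ) := by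
  classical
  set n := Fintype.card V with hn
  set α := _root_.indepNum G with hα
  have hαpos : 0 < α := indepNum_pos G
  have hnpos : 0 < n := Fintype.card_pos
  -- the target set
  set T : Set ℝ := {r : ℝ | ∃ a b : ℕ, 0 < b ∧
    (∃ ψ : V → Finset (Fin a), (∀ v, b ≤ (ψ v).card) ∧
      ∀ u v, G.Adj u v → Disjoint (ψ u) (ψ v)) ∧ r = a / b} with hT
  ----------------------------------------------------------------
  -- LOWER BOUND: every element of T is at least n/α
  ----------------------------------------------------------------
  have hlb : ∀ r ∈ T, (n : ℝ) / (α : ℝ) ≤ r := by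
    rintro r ⟨a, b, hb, ⟨ψ, hψc, hψd⟩, rfl⟩
    have key : b * n ≤ a * α := by
      calc b * n = ∑ _v : V, b := by rw [Finset.sum_const, smul_eq_mul, mul_comm, Finset.card_univ]
        _ ≤ ∑ v : V, (ψ v).card := Finset.sum_le_sum fun v _ => hψc v
        _ = ∑ v : V, ∑ i : Fin a, (if i ∈ ψ v then 1 else 0) := by
            refine Finset.sum_congr rfl fun v _ => ?_
            rw [← Finset.card_filter, Finset.filter_univ_mem]
        _ = ∑ i : Fin a, (Finset.univ.filter (fun v => i ∈ ψ v)).card := by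
            rw [Finset.sum_comm]
            exact Finset.sum_congr rfl fun i _ => (Finset.card_filter _ _).symm
        _ ≤ ∑ _i : Fin a, α := by
            refine Finset.sum_le_sum fun i _ => ?_
            refine indep_card_le G ?_
            intro u hu v hv hadj
            rw [Finset.mem_filter] at hu hv
            exact (Finset.disjoint_left.1 (hψd u v hadj)) hu.2 hv.2
        _ = a * α := by rw [Finset.sum_const, smul_eq_mul]; simp
    rw [div_le_div_iff₀ (by exact_mod_cast hαpos) (by exact_mod_cast hb)]
    have : (b : ℝ) * n ≤ a * α := by exact_mod_cast key
    nlinarith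
  ----------------------------------------------------------------
  -- MEMBERSHIP: n/α ∈ T, via the automorphism construction
  ----------------------------------------------------------------
  have hmemT : (n : ℝ) / (α : ℝ) ∈ T := by
    set Γ : Finset (V ≃ V) :=
      Finset.univ.filter (fun σ => ∀ u v : V, G.Adj (σ u) (σ v) ↔ G.Adj u v) with hΓ
    have hmem : ∀ σ : V ≃ V, σ ∈ Γ ↔ ∀ u v : V, G.Adj (σ u) (σ v) ↔ G.Adj u v := by
      intro σ; simp [hΓ]
    have hrefl : Equiv.refl V ∈ Γ := by simp [hmem]
    have htrans : ∀ σ τ : V ≃ V, σ ∈ Γ → τ ∈ Γ → σ.trans τ ∈ Γ := by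
      intro σ τ hσ hτ
      rw [hmem] at *
      intro u v
      simp only [Equiv.trans_apply]
      rw [hτ, hσ]
    have hsymm : ∀ σ : V ≃ V, σ ∈ Γ → σ.symm ∈ Γ := by
      intro σ hσ
      rw [hmem] at *
      intro u v
      rw [← hσ (σ.symm u) (σ.symm v)]
      simp
    have htr : ∀ u v : V, ∃ σ ∈ Γ, σ u = v := by
      intro u v
      obtain ⟨φ, hφ⟩ := ht u v
      exact ⟨φ.toEquiv, (hmem _).2 (fun a b => φ.map_rel_iff), hφ⟩
    have hcount : ∀ s v s' v' : V,
        (Γ.filter (fun σ => σ s = v)).card = (Γ.filter (fun σ => σ s' = v')).card := by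
      intro s v s' v'
      obtain ⟨h, hhΓ, hh⟩ := htr s' s
      obtain ⟨h', hh'Γ, hh'⟩ := htr v v'
      apply Finset.card_nbij' (fun σ => (h.trans σ).trans h')
        (fun τ => (h.symm.trans τ).trans h'.symm)
      · intro σ hσ
        rw [Finset.mem_coe, Finset.mem_filter] at hσ ⊢
        exact ⟨htrans _ _ (htrans _ _ hhΓ hσ.1) hh'Γ, by simp [hh, hσ.2, hh']⟩
      · intro τ hτ
        rw [Finset.mem_coe, Finset.mem_filter] at hτ ⊢
        refine ⟨htrans _ _ (htrans _ _ (hsymm _ hhΓ) hτ.1) (hsymm _ hh'Γ), ?_⟩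
        simp only [Equiv.trans_apply]
        rw [← hh, Equiv.symm_apply_apply, hτ.2, ← hh', Equiv.symm_apply_apply]
      · intro σ _; ext x; simp
      · intro τ _; ext x; simp
    obtain ⟨v₀⟩ := (inferInstance : Nonempty V)
    set c : ℕ := (Γ.filter (fun σ => σ v₀ = v₀)).card with hcdef
    have hc : ∀ s v : V, (Γ.filter (fun σ => σ s = v)).card = c :=
      fun s v => hcount s v v₀ v₀
    have hcpos : 0 < c := by
      rw [hcdef]
      exact Finset.card_pos.2 ⟨Equiv.refl V, Finset.mem_filter.2 ⟨hrefl, rfl⟩⟩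
    have hΓcard : Γ.card = n * c := by
      have h1 := Finset.card_eq_sum_card_fiberwise
        (s := Γ) (t := (Finset.univ : Finset V)) (f := fun σ => σ v₀)
        (fun σ _ => Finset.mem_univ _)
      rw [h1, Finset.sum_congr rfl (fun v _ => hc v₀ v), Finset.sum_const, smul_eq_mul,
        Finset.card_univ]
    obtain ⟨S, hScard, hSind⟩ := exists_max_indep G
    set e : {x // x ∈ Γ} ≃ Fin Γ.card := Γ.equivFin with he
    set ψ : V → Finset (Fin Γ.card) :=
      fun v => Finset.univ.filter (fun i => ((e.symm i : V ≃ V)).symm v ∈ S) with hψ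
    have hψcard : ∀ v, (ψ v).card = α * c := by
      intro v
      have step1 : (ψ v).card = (Γ.filter (fun σ => σ.symm v ∈ S)).card := by
        refine (Finset.card_bij' (fun (σ : V ≃ V) (hσ : σ ∈ Γ.filter _) =>
          e ⟨σ, (Finset.mem_filter.1 hσ).1⟩) (fun i _ => ((e.symm i : V ≃ V))) ?_ ?_ ?_ ?_).symm
        · intro σ hσ
          rw [Finset.mem_filter] at hσ
          rw [hψ]
          simp only [Finset.mem_filter, Finset.mem_univ, true_and, Equiv.symm_apply_apply]
          exact hσ.2
        · intro i hi
          rw [hψ] at hi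
          simp only [Finset.mem_filter, Finset.mem_univ, true_and] at hi
          exact Finset.mem_filter.2 ⟨(e.symm i).2, hi⟩
        · intro σ hσ; simp
        · intro i hi; simp
      have step2 : (Γ.filter (fun σ => σ.symm v ∈ S)).card = ∑ s ∈ S, c := by
        rw [Finset.card_eq_sum_card_fiberwise
          (s := Γ.filter (fun σ => σ.symm v ∈ S)) (t := S) (f := fun σ => σ.symm v)
          (fun σ hσ => (Finset.mem_filter.1 hσ).2)]
        refine Finset.sum_congr rfl fun s hs => ?_
        rw [← hc s v]
        congr 1
        ext σ
        simp only [Finset.mem_filter]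
        constructor
        · rintro ⟨⟨h1, _⟩, h3⟩
          exact ⟨h1, by rw [← h3]; simp⟩
        · rintro ⟨h1, h2⟩
          have : σ.symm v = s := by rw [← h2]; simp
          exact ⟨⟨h1, this ▸ hs⟩, this⟩
      rw [step1, step2, Finset.sum_const, smul_eq_mul, hScard]
    refine ⟨Γ.card, α * c, Nat.mul_pos hαpos hcpos, ⟨ψ, fun v => (hψcard v).ge, ?_⟩, ?_⟩
    · intro u v hadj
      rw [Finset.disjoint_left]
      intro i hiu hiv
      rw [hψ] at hiu hiv
      simp only [Finset.mem_filter, Finset.mem_univ, true_and] at hiu hiv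
      set σ : V ≃ V := (e.symm i : V ≃ V) with hσ
      have hσΓ : σ ∈ Γ := (e.symm i).2
      have : G.Adj (σ.symm u) (σ.symm v) := by
        rw [← (hmem σ).1 hσΓ (σ.symm u) (σ.symm v)]
        simpa using hadj
      exact hSind _ hiu _ hiv this
    · rw [hΓcard]
      push_cast
      rw [mul_comm (α : ℝ) (c : ℝ), mul_comm (n : ℝ) (c : ℝ),
        mul_div_mul_left _ _ (by exact_mod_cast hcpos.ne')]
  ----------------------------------------------------------------
  -- conclusion
  ----------------------------------------------------------------
  have hbdd : BddBelow T := ⟨0, by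
    rintro r ⟨a, b, hb, _, rfl⟩
    positivity⟩
  rw [fracChrom, ← hT]
  exact le_antisymm (csInf_le hbdd hmemT) (le_csInf ⟨_, hmemT⟩ hlb)
end

section
/- The fractional chromatic number of C_5 ⊠ K_2, the strong product of the 5-cycle with the complete graph on two vertices, equals 5. -/
open SimpleGraph

instance inst_s2 : DecidableRel C5K2.Adj :=
  inferInstanceAs (DecidableRel (strongProd (SimpleGraph.cycleGraph 5)
    (⊤ : SimpleGraph (Fin 2))).Adj)

lemma C5K2_no_triple : ∀ u v w : Fin 5 × Fin 2, ¬C5K2.Adj u v → ¬C5K2.Adj u w →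
    ¬C5K2.Adj v w → u = v ∨ u = w ∨ v = w := by decide

lemma indep_card_le_two (s : Finset (Fin 5 × Fin 2))
    (h : ∀ u ∈ s, ∀ v ∈ s, ¬C5K2.Adj u v) : s.card ≤ 2 := by
  by_contra hc
  push_neg at hc
  obtain ⟨a, b, c, ha, hb, hcc, hab, hac, hbc⟩ := Finset.two_lt_card_iff.mp hc
  rcases C5K2_no_triple a b c (h a ha b hb) (h a ha c hcc) (h b hb c hcc) with h1 | h1 | h1
  exacts [hab h1, hac h1, hbc h1]

def colf : Fin 5 × Fin 2 → Fin 5 := fun p => ⟨(2 * p.1.val + p.2.val) % 5, Nat.mod_lt _ (by omega)⟩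

lemma colf_proper : ∀ u v, C5K2.Adj u v → colf u ≠ colf v := by decide

lemma five_mem : (5 : ℝ) ∈ {r : ℝ | ∃ a b : ℕ, 0 < b ∧
    (∃ ψ : (Fin 5 × Fin 2) → Finset (Fin a), (∀ v, b ≤ (ψ v).card) ∧
      ∀ u v, C5K2.Adj u v → Disjoint (ψ u) (ψ v)) ∧ r = a / b} := by
  refine ⟨5, 1, one_pos, ⟨fun v => {colf v}, fun v => by simp, fun u v huv => ?_⟩, by norm_num⟩
  exact Finset.disjoint_singleton.mpr (colf_proper u v huv)

lemma five_le (r : ℝ) (hr : r ∈ {r : ℝ | ∃ a b : ℕ, 0 < b ∧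
    (∃ ψ : (Fin 5 × Fin 2) → Finset (Fin a), (∀ v, b ≤ (ψ v).card) ∧
      ∀ u v, C5K2.Adj u v → Disjoint (ψ u) (ψ v)) ∧ r = a / b}) : 5 ≤ r := by
  obtain ⟨a, b, hb, ⟨ψ, hcard, hdisj⟩, rfl⟩ := hr
  have key : 10 * b ≤ 2 * a := by
    have h1 : 10 * b ≤ ∑ v : Fin 5 × Fin 2, (ψ v).card := by
      calc 10 * b = ∑ _v : Fin 5 × Fin 2, b := by
            simp [Finset.sum_const, Finset.card_univ, mul_comm]
        _ ≤ _ := Finset.sum_le_sum fun v _ => hcard v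
    have h2 : ∑ v : Fin 5 × Fin 2, (ψ v).card = ∑ c : Fin a,
        (Finset.univ.filter (fun v : Fin 5 × Fin 2 => c ∈ ψ v)).card := by
      have e : ∀ v, (ψ v).card = ∑ c : Fin a, if c ∈ ψ v then 1 else 0 := by
        intro v
        rw [← Finset.card_filter]
        congr 1
        exact (Finset.filter_univ_mem _).symm
      simp only [e, Finset.card_filter]
      exact Finset.sum_comm
    have h3 : ∀ c : Fin a,
        (Finset.univ.filter (fun v : Fin 5 × Fin 2 => c ∈ ψ v)).card ≤ 2 := by
      intro c
      apply indep_card_le_two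
      intro u hu v hv hadj
      simp only [Finset.mem_filter] at hu hv
      exact (Finset.disjoint_left.mp (hdisj u v hadj) hu.2) hv.2
    calc 10 * b ≤ ∑ v : Fin 5 × Fin 2, (ψ v).card := h1
      _ = _ := h2
      _ ≤ ∑ _c : Fin a, 2 := Finset.sum_le_sum fun c _ => h3 c
      _ = 2 * a := by simp [mul_comm]
  have hb' : (0 : ℝ) < b := by exact_mod_cast hb
  rw [le_div_iff₀ hb']
  have : 5 * b ≤ a := by omega
  exact_mod_cast this

/-- The fractional chromatic number of `C₅ ⊠ K₂` equals 5. -/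
theorem fracChrom_C5K2 : fracChrom C5K2 = 5 := by
  unfold fracChrom
  exact le_antisymm (csInf_le ⟨5, five_le⟩ five_mem) (le_csInf ⟨5, five_mem⟩ five_le)
end

section
/- The graph C_5 ⊠ K_3 has maximum degree 8, clique number 6, and chromatic number 8. -/
open SimpleGraph

/-- The strong product `C₅ ⊠ K₃`. -/
def C5K3 : SimpleGraph (Fin 5 × Fin 3) :=
  strongProd (SimpleGraph.cycleGraph 5) (⊤ : SimpleGraph (Fin 3))


instance : DecidableRel C5K3.Adj :=
  inferInstanceAs
    (DecidableRel (strongProd (SimpleGraph.cycleGraph 5) (⊤ : SimpleGraph (Fin 3))).Adj)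

/-- No independent set of size 3 in `C₅ ⊠ K₃`. -/
lemma C5K3_noIndep3 : ∀ a b c : Fin 5 × Fin 3, ¬C5K3.Adj a b → ¬C5K3.Adj a c →
    ¬C5K3.Adj b c → a = b ∨ a = c ∨ b = c := by decide

/-- An explicit proper 8-coloring of `C₅ ⊠ K₃`. -/
def C5K3col : Fin 5 → Fin 3 → Fin 8 := ![![0,1,2],![3,4,6],![0,1,5],![2,3,4],![5,6,7]]

lemma C5K3col_valid : ∀ a b : Fin 5 × Fin 3, C5K3.Adj a b →
    C5K3col a.1 a.2 ≠ C5K3col b.1 b.2 := by decide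

lemma C5K3_clique6 :
    C5K3.IsNClique 6 ({(0,0),(0,1),(0,2),(1,0),(1,1),(1,2)} : Finset (Fin 5 × Fin 3)) := by
  rw [isNClique_iff]
  refine ⟨?_, by decide⟩
  intro a ha b hb hne
  revert ha hb hne; revert a b
  decide

lemma cycle5_clique_le :
    ∀ t : Finset (Fin 5), (∀ a ∈ t, ∀ b ∈ t, a = b ∨ (SimpleGraph.cycleGraph 5).Adj a b) →
      t.card ≤ 2 := by decide

lemma C5K3_cliqueFree7 : C5K3.CliqueFree 7 := by
  intro s hs
  have hsub : s ⊆ (s.image Prod.fst) ×ˢ (Finset.univ : Finset (Fin 3)) := by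
    intro x hx
    simp only [Finset.mem_product, Finset.mem_image, Finset.mem_univ, and_true]
    exact ⟨x, hx, rfl⟩
  have himg : (s.image Prod.fst).card ≤ 2 := by
    apply cycle5_clique_le
    intro a ha b hb
    simp only [Finset.mem_image] at ha hb
    obtain ⟨x, hx, rfl⟩ := ha
    obtain ⟨y, hy, rfl⟩ := hb
    by_cases hxy : x = y
    · subst hxy; exact Or.inl rfl
    · exact (hs.1 hx hy hxy).2.1
  have : s.card ≤ 6 := by
    calc s.card ≤ ((s.image Prod.fst) ×ˢ (Finset.univ : Finset (Fin 3))).card :=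
          Finset.card_le_card hsub
      _ = (s.image Prod.fst).card * 3 := by simp [Finset.card_product]
      _ ≤ 2 * 3 := by omega
      _ = 6 := rfl
  have h7 := hs.2
  omega
  -- hs.2 : s.card = 7

lemma C5K3_cliqueBound : ∀ n ∈ {n | ∃ s, C5K3.IsNClique n s}, n ≤ 6 := by
  rintro n ⟨s, hs⟩
  by_contra h
  push_neg at h
  have hcard := hs.2
  obtain ⟨t, hts, ht7⟩ := Finset.exists_subset_card_eq (show 7 ≤ s.card by omega)
  exact C5K3_cliqueFree7 t ⟨hs.1.subset hts, ht7⟩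

lemma C5K3_colorable8 : C5K3.Colorable 8 :=
  ⟨Coloring.mk (fun p => C5K3col p.1 p.2) (fun {a b} h => C5K3col_valid a b h)⟩

lemma C5K3_not_colorable7 : ¬ C5K3.Colorable 7 := by
  rintro ⟨C⟩
  have hcard : Fintype.card (Fin 7) * 2 < Fintype.card (Fin 5 × Fin 3) := by simp
  obtain ⟨y, hy⟩ := Fintype.exists_lt_card_fiber_of_mul_lt_card (f := fun x => C x) hcard
  rw [Finset.two_lt_card] at hy
  obtain ⟨a, ha, b, hb, c, hc, hab, hac, hbc⟩ := hy
  simp only [Finset.mem_filter] at ha hb hc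
  have nab : ¬ C5K3.Adj a b := fun h => C.valid h (by rw [ha.2, hb.2])
  have nac : ¬ C5K3.Adj a c := fun h => C.valid h (by rw [ha.2, hc.2])
  have nbc : ¬ C5K3.Adj b c := fun h => C.valid h (by rw [hb.2, hc.2])
  rcases C5K3_noIndep3 a b c nab nac nbc with h | h | h <;> contradiction

/-- `C₅ ⊠ K₃` has maximum degree 8, clique number 6, and chromatic number 8. -/
theorem C5K3_properties :
    C5K3.maxDegree = 8 ∧ C5K3.cliqueNum = 6 ∧ C5K3.chromaticNumber = 8 := by
  refine ⟨by decide, ?_, ?_⟩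
  · apply le_antisymm
    · exact csSup_le ⟨6, _, C5K3_clique6⟩ C5K3_cliqueBound
    · exact le_csSup ⟨6, C5K3_cliqueBound⟩ ⟨_, C5K3_clique6⟩
  · apply le_antisymm
    · exact_mod_cast chromaticNumber_le_iff_colorable.mpr C5K3_colorable8
    · by_contra h
      push_neg at h
      have h7 : C5K3.chromaticNumber ≤ (7 : ℕ) := by
        have : C5K3.chromaticNumber < (7 : ℕ∞) + 1 := by norm_num at h ⊢; exact h
        exact Order.le_of_lt_add_one this
      exact C5K3_not_colorable7 (chromaticNumber_le_iff_colorable.mp h7)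
end

section
/- The graph C_5 ⊠ K_2 is 5-regular, has clique number 4 (in particular it is K_5-free), and has independence number 2. -/
open SimpleGraph

instance : DecidableRel C5K2.Adj :=
  inferInstanceAs
    (DecidableRel (strongProd (SimpleGraph.cycleGraph 5) (⊤ : SimpleGraph (Fin 2))).Adj)


lemma C5_cf3 : (SimpleGraph.cycleGraph 5 : SimpleGraph (Fin 5)).CliqueFree 3 := by
  show ∀ t : Finset (Fin 5), ¬ _; decide

lemma C5K2_cf5 : C5K2.CliqueFree 5 := by
  intro t ht
  have hclique := ht.isClique
  have hcard := ht.card_eq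
  have hs : (SimpleGraph.cycleGraph 5).IsClique (t.image Prod.fst : Finset (Fin 5)) := by
    intro a ha b hb hab
    simp only [Finset.coe_image, Set.mem_image, Finset.mem_coe] at ha hb
    obtain ⟨u, hu, rfl⟩ := ha
    obtain ⟨v, hv, rfl⟩ := hb
    have h := hclique hu hv (fun h => hab (by rw [h]))
    rcases h.2.1 with h' | h'
    · exact absurd h' hab
    · exact h'
  have hcard2 : (t.image Prod.fst).card ≤ 2 := by
    by_contra h
    push_neg at h
    obtain ⟨u, hu, hucard⟩ :=
      Finset.exists_subset_card_eq (show 3 ≤ (t.image Prod.fst).card by omega)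
    exact C5_cf3 u ⟨hs.subset hu, hucard⟩
  have hsub : t ⊆ (t.image Prod.fst) ×ˢ (Finset.univ : Finset (Fin 2)) := by
    intro x hx
    exact Finset.mem_product.mpr ⟨Finset.mem_image_of_mem _ hx, Finset.mem_univ _⟩
  have := Finset.card_le_card hsub
  rw [Finset.card_product, hcard] at this
  simp at this
  omega

lemma indep3 : ∀ a b c : Fin 5 × Fin 2, a ≠ b → a ≠ c → b ≠ c →
    ¬(¬C5K2.Adj a b ∧ ¬C5K2.Adj a c ∧ ¬C5K2.Adj b c) := by decide

lemma C5K2_cliqueNum : C5K2.cliqueNum = 4 := by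
  apply le_antisymm
  · have hne : {n | ∃ s, C5K2.IsNClique n s}.Nonempty := ⟨0, ∅, isNClique_empty.mpr rfl⟩
    apply csSup_le hne
    rintro n ⟨s, hs⟩
    by_contra h
    push_neg at h
    have h5 : 5 ≤ s.card := by rw [hs.card_eq]; omega
    obtain ⟨u, hu, hucard⟩ := Finset.exists_subset_card_eq h5
    exact C5K2_cf5 u ⟨hs.isClique.subset hu, hucard⟩
  · have h4 : C5K2.IsNClique 4 {(0,0),(0,1),(1,0),(1,1)} := by
      constructor
      · decide
      · decide
    exact h4.card_eq ▸ h4.isClique.card_le_cliqueNum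

lemma C5K2_indepNum : _root_.indepNum C5K2 = 2 := by
  have hmem : 2 ∈ {n | ∃ s : Finset (Fin 5 × Fin 2),
      s.card = n ∧ ∀ u ∈ s, ∀ v ∈ s, ¬C5K2.Adj u v} :=
    ⟨{(0,0),(2,0)}, by decide, by decide⟩
  have hbdd : ∀ n ∈ {n | ∃ s : Finset (Fin 5 × Fin 2),
      s.card = n ∧ ∀ u ∈ s, ∀ v ∈ s, ¬C5K2.Adj u v}, n ≤ 2 := by
    rintro n ⟨s, hcard, hindep⟩
    by_contra h
    push_neg at h
    obtain ⟨u, hu, hucard⟩ := Finset.exists_subset_card_eq (show 3 ≤ s.card by omega)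
    obtain ⟨a, b, c, hab, hac, hbc, rfl⟩ := Finset.card_eq_three.mp hucard
    have ha := hu (by simp : a ∈ ({a,b,c} : Finset _))
    have hb := hu (by simp : b ∈ ({a,b,c} : Finset _))
    have hc := hu (by simp : c ∈ ({a,b,c} : Finset _))
    exact indep3 a b c hab hac hbc ⟨hindep a ha b hb, hindep a ha c hc, hindep b hb c hc⟩
  unfold _root_.indepNum
  exact le_antisymm (csSup_le ⟨2, hmem⟩ hbdd) (le_csSup ⟨2, hbdd⟩ hmem)

/-- `C₅ ⊠ K₂` is 5-regular, has clique number 4 (so is `K₅`-free), and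
independence number 2. -/
theorem C5K2_properties :
    C5K2.IsRegularOfDegree 5 ∧ C5K2.cliqueNum = 4 ∧ C5K2.CliqueFree 5 ∧
      _root_.indepNum C5K2 = 2 := by
  refine ⟨?_, C5K2_cliqueNum, C5K2_cf5, C5K2_indepNum⟩
  show ∀ v, _ = 5
  decide
end

section
/- Let G be a graph with maximum degree at most 4, let uvw be a triangle in G where d(u) = d(v) = 3, let u' be the third neighbor of u and v' the third neighbor of v (u', v' outside the triangle). Suppose ψ is an assignment of subsets of {1,...,M} to the vertices of G' = G − {u,v,w} such that adjacent vertices of G' receive disjoint sets, |ψ(y)| ≥ (12 − d_{G'}(y))M/31 for all y in G', and |ψ(u') ∖ ψ(v')| ≥ (8 − d(w))M/31. Then ψ can be extended to color w, v, u with sets of sizes (12−d(w))M/31, 9M/31, 9M/31 respectively, keeping adjacent vertices' sets disjoint (here the sets assigned to u', v', and the other neighbors of w are first shrunk to sizes (12 − d_G(·))M/31). -/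
open SimpleGraph

lemma exists_shrink_prefer_aux {α : Type*} [DecidableEq α] (A P : Finset α) (n : ℕ)
    (h : n ≤ A.card) :
    ∃ s, s ⊆ A ∧ s.card = n ∧ min n ((A ∩ P).card) ≤ (s ∩ P).card := by
  obtain ⟨p, hpA, hp⟩ := Finset.exists_subset_card_eq
    (min_le_right n (A ∩ P).card)
  obtain ⟨s, hps, hsA, hcard⟩ := Finset.exists_subsuperset_card_eq
    (hpA.trans Finset.inter_subset_left) (by rw [hp]; exact min_le_left _ _) h
  refine ⟨s, hsA, hcard, ?_⟩
  calc min n (A ∩ P).card = p.card := hp.symm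
    _ ≤ (s ∩ P).card := Finset.card_le_card
        (Finset.subset_inter hps (hpA.trans Finset.inter_subset_right))

lemma exists_shrink_avoid_aux {α : Type*} [DecidableEq α] (A P : Finset α) (n : ℕ)
    (h : n ≤ A.card) :
    ∃ s, s ⊆ A ∧ s.card = n ∧ (s ∩ P).card + min n ((A \ P).card) ≤ n := by
  obtain ⟨s, hsA, hcard, hmin⟩ := exists_shrink_prefer_aux A (A \ P) n h
  have e1 : A ∩ (A \ P) = A \ P := by
    ext a; simp only [Finset.mem_inter, Finset.mem_sdiff]; tauto
  have e2 : s ∩ (A \ P) = s \ P := by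
    ext a; simp only [Finset.mem_inter, Finset.mem_sdiff]
    exact ⟨fun ⟨h1, _, h3⟩ => ⟨h1, h3⟩, fun ⟨h1, h2⟩ => ⟨h1, hsA h1, h2⟩⟩
  rw [e1, e2] at hmin
  have h3 := Finset.card_inter_add_card_sdiff s P
  exact ⟨s, hsA, hcard, by omega⟩

lemma stage23_aux {α : Type*} [Fintype α] [DecidableEq α] (m km : ℕ)
    (hU : Fintype.card α = 31 * m)
    (Su Sv F : Finset α) (hSu : Su.card ≤ 11 * m) (hSv : Sv.card ≤ 11 * m)
    (hI7 : (Su ∩ Sv).card ≤ 7 * m)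
    (hkm8 : 8 * m ≤ km) (hkm10 : km ≤ 10 * m)
    (hF : F.card + km ≤ 31 * m)
    (hKey : ((Su ∩ Sv) ∩ F).card + km ≤ 13 * m) :
    ∃ Sw Au Av : Finset α, Sw.card = km ∧ Au.card = 9 * m ∧ Av.card = 9 * m ∧
      Disjoint Sw F ∧ Disjoint Au Av ∧ Disjoint Au Sw ∧ Disjoint Av Sw ∧
      Disjoint Au Su ∧ Disjoint Av Sv := by
  set I := Su ∩ Sv with hIdef
  have hFc : km ≤ (Fᶜ).card := by rw [Finset.card_compl, hU]; omega
  obtain ⟨Sw, hSwF, hSwcard, hSwmin⟩ := exists_shrink_prefer_aux (Fᶜ) (I \ F) km hFc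
  have eIF : Fᶜ ∩ (I \ F) = I \ F := by
    ext a; simp only [Finset.mem_inter, Finset.mem_compl, Finset.mem_sdiff]; tauto
  rw [eIF] at hSwmin
  have hIFle : (I \ F).card ≤ I.card := Finset.card_le_card (Finset.sdiff_subset)
  have hmin_eq : min km (I \ F).card = (I \ F).card := by omega
  rw [hmin_eq] at hSwmin
  have hIS : (I \ Sw).card + (I ∩ Sw).card = I.card := Finset.card_sdiff_add_card_inter I Sw
  have hIF : (I \ F).card + (I ∩ F).card = I.card := Finset.card_sdiff_add_card_inter I F
  have hcomm : (Sw ∩ (I \ F)).card ≤ (I ∩ Sw).card := by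
    apply Finset.card_le_card; intro a ha
    simp only [Finset.mem_inter, Finset.mem_sdiff] at ha ⊢; tauto
  have hISw : (I \ Sw).card ≤ (I ∩ F).card := by omega
  have hSwdisjF : Disjoint Sw F := by
    rw [Finset.disjoint_left]; intro a ha hain
    exact (Finset.mem_compl.mp (hSwF ha)) hain
  set X := (Sw ∪ Su)ᶜ with hXdef
  set Y := (Sw ∪ Sv)ᶜ with hYdef
  have hXcard : 10 * m ≤ X.card := by
    rw [hXdef, Finset.card_compl, hU]
    have := Finset.card_union_le Sw Su
    omega
  have hYcard : 10 * m ≤ Y.card := by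
    rw [hYdef, Finset.card_compl, hU]
    have := Finset.card_union_le Sw Sv
    omega
  have hXY : 18 * m ≤ (X ∪ Y).card := by
    have e : X ∪ Y = (Sw ∪ I)ᶜ := by
      rw [hXdef, hYdef, ← Finset.compl_inter, ← Finset.union_inter_distrib_left, hIdef]
    have h1 : (I \ Sw).card + Sw.card = (I ∪ Sw).card := Finset.card_sdiff_add_card I Sw
    have h2 : (I ∪ Sw) = (Sw ∪ I) := Finset.union_comm _ _
    rw [e, Finset.card_compl, hU, ← h2, ← h1]
    omega
  obtain ⟨Au, hAuX, hAucard, hAumin⟩ := exists_shrink_avoid_aux X Y (9 * m) (by omega)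
  have hYAu : 9 * m ≤ (Y \ Au).card := by
    have h1 : (Y \ Au).card + (Y ∩ Au).card = Y.card := Finset.card_sdiff_add_card_inter Y Au
    have h2 : (Y ∩ Au).card = (Au ∩ Y).card := by rw [Finset.inter_comm]
    have h3 : (X \ Y).card + Y.card = (X ∪ Y).card := Finset.card_sdiff_add_card X Y
    omega
  obtain ⟨Av, hAvYAu, hAvcard⟩ := Finset.exists_subset_card_eq hYAu
  have hAvY : Av ⊆ Y := hAvYAu.trans Finset.sdiff_subset
  refine ⟨Sw, Au, Av, hSwcard, hAucard, hAvcard, hSwdisjF, ?_, ?_, ?_, ?_, ?_⟩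
  · rw [Finset.disjoint_left]; intro a ha hav
    exact (Finset.mem_sdiff.mp (hAvYAu hav)).2 ha
  · rw [Finset.disjoint_left]; intro a ha hsw
    exact (Finset.mem_compl.mp (hAuX ha)) (Finset.mem_union_left _ hsw)
  · rw [Finset.disjoint_left]; intro a ha hsw
    exact (Finset.mem_compl.mp (hAvY ha)) (Finset.mem_union_left _ hsw)
  · rw [Finset.disjoint_left]; intro a ha hsu
    exact (Finset.mem_compl.mp (hAuX ha)) (Finset.mem_union_right _ hsu)
  · rw [Finset.disjoint_left]; intro a ha hsv
    exact (Finset.mem_compl.mp (hAvY ha)) (Finset.mem_union_right _ hsv)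

set_option maxHeartbeats 2000000 in
/-- Fact 2: extending a coloring of `G - {u,v,w}` over a triangle `uvw`
with `d(u) = d(v) = 3`, given `|ψ(u') \\ ψ(v')| ≥ (8 - d(w))M/31`. -/
theorem fact2_extension {V : Type*} [Fintype V] [DecidableEq V]
    (G : SimpleGraph V) [DecidableRel G.Adj]
    (hdeg : ∀ z, G.degree z ≤ 4) (M : ℕ) (hM : 31 ∣ M)
    (u v w u' v' : V)
    (huv : G.Adj u v) (huw : G.Adj u w) (hvw : G.Adj v w)
    (hdu : G.degree u = 3) (hdv : G.degree v = 3)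
    (hu' : G.neighborFinset u = {v, w, u'}) (hv' : G.neighborFinset v = {u, w, v'})
    (ψ : V → Finset (Fin M))
    (hdisj : ∀ y z, y ∉ ({u, v, w} : Set V) → z ∉ ({u, v, w} : Set V) →
      G.Adj y z → Disjoint (ψ y) (ψ z))
    (hcard : ∀ y, y ∉ ({u, v, w} : Set V) →
      (12 - (G.neighborFinset y \ {u, v, w}).card) * M / 31 ≤ (ψ y).card)
    (hkey : (8 - G.degree w) * M / 31 ≤ (ψ u' \ ψ v').card) :
    ∃ ψ' : V → Finset (Fin M),
      (∀ y, y ∉ ({u, v, w} : Set V) →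
        ψ' y ⊆ ψ y ∧ (ψ' y).card = (12 - G.degree y) * M / 31) ∧
      (ψ' u).card = 9 * M / 31 ∧ (ψ' v).card = 9 * M / 31 ∧
      (ψ' w).card = (12 - G.degree w) * M / 31 ∧
      (∀ y z, G.Adj y z → Disjoint (ψ' y) (ψ' z)) := by
  classical
  obtain ⟨m, hm⟩ := hM
  have hdiv : ∀ k : ℕ, k * M / 31 = k * m := by
    intro k
    rw [hm, mul_comm 31 m, ← mul_assoc, Nat.mul_div_cancel _ (by norm_num)]
  rcases Nat.eq_zero_or_pos m with hm0 | hmpos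
  · -- degenerate case M = 0
    have hMz : M = 0 := by omega
    have hzero : ∀ s : Finset (Fin M), s.card = 0 := by
      intro s
      have h1 : s.card ≤ Fintype.card (Fin M) := Finset.card_le_univ s
      rw [Fintype.card_fin] at h1
      omega
    refine ⟨fun _ => ∅, fun y _ => ⟨Finset.empty_subset _, ?_⟩, ?_, ?_, ?_,
      fun _ _ _ => Finset.disjoint_empty_left _⟩ <;>
      simp [hdiv, hm0]
  -- main case
  -- basic distinctness facts
  have hne_uv : u ≠ v := huv.ne
  have hne_uw : u ≠ w := huw.ne
  have hne_vw : v ≠ w := hvw.ne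
  have hmem_u'Nu : u' ∈ G.neighborFinset u := by rw [hu']; simp
  have hadj_uu' : G.Adj u u' := (SimpleGraph.mem_neighborFinset _ _ _).mp hmem_u'Nu
  have hmem_v'Nv : v' ∈ G.neighborFinset v := by rw [hv']; simp
  have hadj_vv' : G.Adj v v' := (SimpleGraph.mem_neighborFinset _ _ _).mp hmem_v'Nv
  have hu'u : u' ≠ u := hadj_uu'.ne'
  have hv'v : v' ≠ v := hadj_vv'.ne'
  have card3u : ({v, w, u'} : Finset V).card = 3 := by rw [← hu']; exact hdu
  have card3v : ({u, w, v'} : Finset V).card = 3 := by rw [← hv']; exact hdv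
  have pair_le : ∀ (s : Finset V) (a b : V), s ⊆ {a, b} → s.card ≤ 2 := by
    intro s a b hs
    refine (Finset.card_le_card hs).trans ?_
    refine (Finset.card_insert_le _ _).trans ?_
    simp
  have hu'v : u' ≠ v := by
    intro h
    have hsub : ({v, w, u'} : Finset V) ⊆ {v, w} := by
      intro x hx; simp at hx ⊢
      rcases hx with rfl | rfl | rfl
      · exact Or.inl rfl
      · exact Or.inr rfl
      · exact Or.inl h
    have := pair_le _ _ _ hsub; omega
  have hu'w : u' ≠ w := by
    intro h
    have hsub : ({v, w, u'} : Finset V) ⊆ {v, w} := by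
      intro x hx; simp at hx ⊢
      rcases hx with rfl | rfl | rfl
      · exact Or.inl rfl
      · exact Or.inr rfl
      · exact Or.inr h
    have := pair_le _ _ _ hsub; omega
  have hv'u : v' ≠ u := by
    intro h
    have hsub : ({u, w, v'} : Finset V) ⊆ {u, w} := by
      intro x hx; simp at hx ⊢
      rcases hx with rfl | rfl | rfl
      · exact Or.inl rfl
      · exact Or.inr rfl
      · exact Or.inl h
    have := pair_le _ _ _ hsub; omega
  have hv'w : v' ≠ w := by
    intro h
    have hsub : ({u, w, v'} : Finset V) ⊆ {u, w} := by
      intro x hx; simp at hx ⊢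
      rcases hx with rfl | rfl | rfl
      · exact Or.inl rfl
      · exact Or.inr rfl
      · exact Or.inr h
    have := pair_le _ _ _ hsub; omega
  have hdw4 : G.degree w ≤ 4 := hdeg w
  have hdw2 : 2 ≤ G.degree w := by
    have hsub : ({u, v} : Finset V) ⊆ G.neighborFinset w := by
      intro x hx
      simp only [Finset.mem_insert, Finset.mem_singleton] at hx
      rcases hx with rfl | rfl
      · exact (SimpleGraph.mem_neighborFinset _ _ _).mpr huw.symm
      · exact (SimpleGraph.mem_neighborFinset _ _ _).mpr hvw.symm
    have h2 : ({u, v} : Finset V).card = 2 := Finset.card_pair hne_uv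
    have := Finset.card_le_card hsub
    rw [h2] at this
    exact this
  have hu'v' : u' ≠ v' := by
    intro h
    rw [h, hdiv] at hkey
    simp only [Finset.sdiff_self, Finset.card_empty] at hkey
    have h4 : 4 ≤ 8 - G.degree w := by omega
    have := Nat.mul_le_mul_right m h4
    omega
  -- the key cardinality helper
  have hstep : ∀ y, y ≠ u → y ≠ v → y ≠ w → ∀ k : ℕ,
      k ≤ (G.neighborFinset y ∩ ({u, v, w} : Finset V)).card →
      (12 - G.degree y) * m + k * m ≤ (ψ y).card := by
    intro y h1 h2 h3 k hk
    have hyT : y ∉ ({u, v, w} : Set V) := by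
      simp only [Set.mem_insert_iff, Set.mem_singleton_iff]
      push_neg; exact ⟨h1, h2, h3⟩
    have hc := hcard y hyT
    rw [hdiv] at hc
    have hsplit : (G.neighborFinset y \ ({u, v, w} : Finset V)).card
        + (G.neighborFinset y ∩ ({u, v, w} : Finset V)).card
        = (G.neighborFinset y).card := Finset.card_sdiff_add_card_inter _ _
    have hdeg_eq : G.degree y = (G.neighborFinset y).card := rfl
    have hd4 := hdeg y
    refine le_trans ?_ hc
    have hkk : (12 - G.degree y) + k ≤ 12 - (G.neighborFinset y \ ({u, v, w} : Finset V)).card := by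
      omega
    calc (12 - G.degree y) * m + k * m = ((12 - G.degree y) + k) * m := (add_mul _ _ _).symm
      _ ≤ _ := Nat.mul_le_mul_right m hkk
  have hty : ∀ y, y ≠ u → y ≠ v → y ≠ w → (12 - G.degree y) * m ≤ (ψ y).card := by
    intro y h1 h2 h3
    have := hstep y h1 h2 h3 0 (by omega)
    omega
  -- default shrinking
  have hf0 : ∀ y : V, ∃ s : Finset (Fin M),
      (y ≠ u ∧ y ≠ v ∧ y ≠ w) → s ⊆ ψ y ∧ s.card = (12 - G.degree y) * m := by
    intro y
    by_cases hy : y ≠ u ∧ y ≠ v ∧ y ≠ w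
    · obtain ⟨s, hs1, hs2⟩ := Finset.exists_subset_card_eq (hty y hy.1 hy.2.1 hy.2.2)
      exact ⟨s, fun _ => ⟨hs1, hs2⟩⟩
    · exact ⟨∅, fun h => absurd h hy⟩
  choose f hf using hf0
  -- degree lower bounds
  have hdu'1 : 1 ≤ G.degree u' := by
    have : u ∈ G.neighborFinset u' := (SimpleGraph.mem_neighborFinset _ _ _).mpr hadj_uu'.symm
    have := Finset.card_pos.mpr ⟨u, this⟩
    exact this
  have hdv'1 : 1 ≤ G.degree v' := by
    have : v ∈ G.neighborFinset v' := (SimpleGraph.mem_neighborFinset _ _ _).mpr hadj_vv'.symm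
    have := Finset.card_pos.mpr ⟨v, this⟩
    exact this
  have hdu'4 := hdeg u'
  have hdv'4 := hdeg v'
  have htu'le : (12 - G.degree u') * m ≤ 11 * m := Nat.mul_le_mul_right m (by omega)
  have htu'ge : 8 * m ≤ (12 - G.degree u') * m := Nat.mul_le_mul_right m (by omega)
  have htv'le : (12 - G.degree v') * m ≤ 11 * m := Nat.mul_le_mul_right m (by omega)
  -- construct Su with the key property
  obtain ⟨Su, hSuψ, hSucard, hSumin⟩ :=
    exists_shrink_prefer_aux (ψ u') (ψ u' \ ψ v') ((12 - G.degree u') * m)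
      (hty u' hu'u hu'v hu'w)
  have eSu : ψ u' ∩ (ψ u' \ ψ v') = ψ u' \ ψ v' := by
    ext a; simp only [Finset.mem_inter, Finset.mem_sdiff]; tauto
  rw [eSu] at hSumin
  have hkey' : (8 - G.degree w) * m ≤ (ψ u' \ ψ v').card := by rw [← hdiv]; exact hkey
  have hkwle : (8 - G.degree w) * m ≤ 8 * m := Nat.mul_le_mul_right m (by omega)
  have hP0 : (8 - G.degree w) * m ≤ (Su ∩ (ψ u' \ ψ v')).card :=
    le_trans (le_min (by omega) hkey') hSumin
  have hP1 : (Su ∩ ψ v').card + (8 - G.degree w) * m ≤ (12 - G.degree u') * m := by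
    have hsub : Su ∩ (ψ u' \ ψ v') ⊆ Su \ ψ v' := by
      intro a ha
      simp only [Finset.mem_inter, Finset.mem_sdiff] at ha ⊢; tauto
    have hpart : (Su ∩ ψ v').card + (Su \ ψ v').card = (12 - G.degree u') * m := by
      rw [Finset.card_inter_add_card_sdiff, hSucard]
    have := Finset.card_le_card hsub
    omega
  -- construct Sv avoiding Su
  obtain ⟨Sv, hSvψ, hSvcard, hSvmin⟩ :=
    exists_shrink_avoid_aux (ψ v') Su ((12 - G.degree v') * m) (hty v' hv'u hv'v hv'w)
  have hIcomm : (Su ∩ Sv).card = (Sv ∩ Su).card := by rw [Finset.inter_comm]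
  have hpartv' : (ψ v' \ Su).card + (ψ v' ∩ Su).card = (ψ v').card :=
    Finset.card_sdiff_add_card_inter _ _
  have hcommv' : (ψ v' ∩ Su).card = (Su ∩ ψ v').card := by rw [Finset.inter_comm]
  have hψv'1 : (12 - G.degree v') * m + 1 * m ≤ (ψ v').card := by
    refine hstep v' hv'u hv'v hv'w 1 ?_
    refine Finset.card_pos.mpr ⟨v, Finset.mem_inter.mpr
      ⟨(SimpleGraph.mem_neighborFinset _ _ _).mpr hadj_vv'.symm, by simp⟩⟩
  have hIle : (Su ∩ Sv).card ≤ (Su ∩ ψ v').card :=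
    Finset.card_le_card (Finset.inter_subset_inter le_rfl hSvψ)
  -- neighbours of w other than u, v
  set Nw := G.neighborFinset w \ {u, v} with hNwdef
  have hNwcard : Nw.card = G.degree w - 2 := by
    have hsub : ({u, v} : Finset V) ⊆ G.neighborFinset w := by
      intro x hx
      simp only [Finset.mem_insert, Finset.mem_singleton] at hx
      rcases hx with rfl | rfl
      · exact (SimpleGraph.mem_neighborFinset _ _ _).mpr huw.symm
      · exact (SimpleGraph.mem_neighborFinset _ _ _).mpr hvw.symm
    rw [hNwdef, Finset.card_sdiff_of_subset hsub, Finset.card_pair hne_uv]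
    rfl
  have hNwmem : ∀ z ∈ Nw, G.Adj w z ∧ z ≠ u ∧ z ≠ v ∧ z ≠ w := by
    intro z hz
    rw [hNwdef, Finset.mem_sdiff] at hz
    obtain ⟨hz1, hz2⟩ := hz
    have hadj := (SimpleGraph.mem_neighborFinset _ _ _).mp hz1
    simp only [Finset.mem_insert, Finset.mem_singleton] at hz2
    push_neg at hz2
    exact ⟨hadj, hz2.1, hz2.2, fun h => G.loopless.irrefl w (h ▸ hadj)⟩
  have hkwge : 4 * m ≤ (8 - G.degree w) * m := Nat.mul_le_mul_right m (by omega)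
  -- Stage 1: choose the shrunk colouring g of G - {u,v,w}
  have key : ∃ g : V → Finset (Fin M),
      (∀ y, y ≠ u → y ≠ v → y ≠ w → g y ⊆ ψ y ∧ (g y).card = (12 - G.degree y) * m) ∧
      g u' = Su ∧ g v' = Sv ∧
      ((Nw.biUnion g).card + (12 - G.degree w) * m ≤ 31 * m) ∧
      (((Su ∩ Sv) ∩ Nw.biUnion g).card + (12 - G.degree w) * m ≤ 13 * m) := by
    -- the default shrunk assignment
    set g0 : V → Finset (Fin M) := fun y => if y = u' then Su else if y = v' then Sv else f y
      with hg0def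
    have hg0u' : g0 u' = Su := by simp [hg0def]
    have hg0v' : g0 v' = Sv := by simp [hg0def, hu'v'.symm]
    have hg0prop : ∀ y, y ≠ u → y ≠ v → y ≠ w →
        g0 y ⊆ ψ y ∧ (g0 y).card = (12 - G.degree y) * m := by
      intro y h1 h2 h3
      simp only [hg0def]
      by_cases hy1 : y = u'
      · subst hy1; rw [if_pos rfl]; exact ⟨hSuψ, hSucard⟩
      rw [if_neg hy1]
      by_cases hy2 : y = v'
      · subst hy2; rw [if_pos rfl]; exact ⟨hSvψ, hSvcard⟩
      rw [if_neg hy2]; exact hf y ⟨h1, h2, h3⟩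
    have hdw234 : G.degree w = 2 ∨ G.degree w = 3 ∨ G.degree w = 4 := by omega
    rcases hdw234 with hdw | hdw | hdw
    · -- d(w) = 2 : no other neighbours
      have hNw0 : Nw = ∅ := Finset.card_eq_zero.mp (by rw [hNwcard, hdw])
      refine ⟨g0, hg0prop, hg0u', hg0v', ?_, ?_⟩
      · rw [hNw0, hdw]; simp; omega
      · rw [hNw0, hdw]; simp; omega
    · -- d(w) = 3 : one other neighbour z
      obtain ⟨z, hNw1⟩ := Finset.card_eq_one.mp (by rw [hNwcard, hdw] : Nw.card = 1)
      obtain ⟨hadj_wz, hz1, hz2, hz3⟩ :=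
        hNwmem z (by rw [hNw1]; exact Finset.mem_singleton_self z)
      have hP1' := hP1
      rw [hdw] at hP1'
      by_cases hzu' : z = u'
      · -- the other neighbour is u'
        rw [hzu'] at hadj_wz hNw1
        have hdu'2 : 2 ≤ G.degree u' := by
          have hsub : ({u, w} : Finset V) ⊆ G.neighborFinset u' := by
            intro x hx
            simp only [Finset.mem_insert, Finset.mem_singleton] at hx
            rcases hx with rfl | rfl
            · exact (SimpleGraph.mem_neighborFinset _ _ _).mpr hadj_uu'.symm
            · exact (SimpleGraph.mem_neighborFinset _ _ _).mpr hadj_wz.symm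
          have h2 := Finset.card_le_card hsub
          rw [Finset.card_pair hne_uw] at h2
          exact h2
        have htu'10 : (12 - G.degree u') * m ≤ 10 * m := Nat.mul_le_mul_right m (by omega)
        refine ⟨g0, hg0prop, hg0u', hg0v', ?_, ?_⟩
        · rw [hNw1, Finset.singleton_biUnion, hg0u', hSucard, hdw]; omega
        · rw [hNw1, Finset.singleton_biUnion, hg0u', hdw]
          have hss : (Su ∩ Sv) ∩ Su ⊆ Su ∩ Sv := Finset.inter_subset_left
          have := Finset.card_le_card hss
          omega
      by_cases hzv' : z = v'
      · -- the other neighbour is v'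
        rw [hzv'] at hadj_wz hNw1
        have hψv'2 : (12 - G.degree v') * m + 2 * m ≤ (ψ v').card := by
          refine hstep v' hv'u hv'v hv'w 2 ?_
          have hsub : ({v, w} : Finset V) ⊆ G.neighborFinset v' ∩ ({u, v, w} : Finset V) := by
            intro x hx
            simp only [Finset.mem_insert, Finset.mem_singleton] at hx
            rcases hx with rfl | rfl
            · exact Finset.mem_inter.mpr
                ⟨(SimpleGraph.mem_neighborFinset _ _ _).mpr hadj_vv'.symm, by simp⟩
            · exact Finset.mem_inter.mpr
                ⟨(SimpleGraph.mem_neighborFinset _ _ _).mpr hadj_wz.symm, by simp⟩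
          have h2 := Finset.card_le_card hsub
          rw [Finset.card_pair hne_vw] at h2
          exact h2
        refine ⟨g0, hg0prop, hg0u', hg0v', ?_, ?_⟩
        · rw [hNw1, Finset.singleton_biUnion, hg0v', hSvcard, hdw]; omega
        · rw [hNw1, Finset.singleton_biUnion, hg0v', hdw]
          have hss : (Su ∩ Sv) ∩ Sv ⊆ Su ∩ Sv := Finset.inter_subset_left
          have := Finset.card_le_card hss
          omega
      · -- the other neighbour is generic : shrink it avoiding I = Su ∩ Sv
        obtain ⟨S1, hS1ψ, hS1card, hS1min⟩ :=
          exists_shrink_avoid_aux (ψ z) (Su ∩ Sv) ((12 - G.degree z) * m) (hty z hz1 hz2 hz3)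
        have hpsz : (ψ z \ (Su ∩ Sv)).card + (ψ z ∩ (Su ∩ Sv)).card = (ψ z).card :=
          Finset.card_sdiff_add_card_inter _ _
        have hlez : (ψ z ∩ (Su ∩ Sv)).card ≤ (Su ∩ Sv).card :=
          Finset.card_le_card Finset.inter_subset_right
        have hψz1 : (12 - G.degree z) * m + 1 * m ≤ (ψ z).card := by
          refine hstep z hz1 hz2 hz3 1 ?_
          refine Finset.card_pos.mpr ⟨w, Finset.mem_inter.mpr
            ⟨(SimpleGraph.mem_neighborFinset _ _ _).mpr hadj_wz.symm, by simp⟩⟩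
        have hdz1 : 1 ≤ G.degree z :=
          Finset.card_pos.mpr ⟨w, (SimpleGraph.mem_neighborFinset _ _ _).mpr hadj_wz.symm⟩
        have htzle : (12 - G.degree z) * m ≤ 11 * m := Nat.mul_le_mul_right m (by omega)
        set g1 : V → Finset (Fin M) := fun y => if y = z then S1 else g0 y with hg1def
        have hg1z : g1 z = S1 := by simp [hg1def]
        have hg1u' : g1 u' = Su := by
          have : u' ≠ z := fun h => hzu' h.symm
          simp [hg1def, this, hg0u']
        have hg1v' : g1 v' = Sv := by
          have : v' ≠ z := fun h => hzv' h.symm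
          simp [hg1def, this, hg0v']
        have hg1prop : ∀ y, y ≠ u → y ≠ v → y ≠ w →
            g1 y ⊆ ψ y ∧ (g1 y).card = (12 - G.degree y) * m := by
          intro y h1 h2 h3
          simp only [hg1def]
          by_cases hy : y = z
          · subst hy; rw [if_pos rfl]; exact ⟨hS1ψ, hS1card⟩
          · rw [if_neg hy]; exact hg0prop y h1 h2 h3
        have hcomm1 : ((Su ∩ Sv) ∩ S1).card = (S1 ∩ (Su ∩ Sv)).card := by
          rw [Finset.inter_comm]
        refine ⟨g1, hg1prop, hg1u', hg1v', ?_, ?_⟩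
        · rw [hNw1, Finset.singleton_biUnion, hg1z, hS1card, hdw]; omega
        · rw [hNw1, Finset.singleton_biUnion, hg1z, hdw]; omega
    · -- d(w) = 4 : two other neighbours z1, z2
      obtain ⟨z1, z2, hzz, hNw2⟩ := Finset.card_eq_two.mp (by rw [hNwcard, hdw] : Nw.card = 2)
      have hz1mem : z1 ∈ Nw := by rw [hNw2]; simp
      have hz2mem : z2 ∈ Nw := by rw [hNw2]; simp
      obtain ⟨hadj_wz1, hz11, hz12, hz13⟩ := hNwmem z1 hz1mem
      obtain ⟨hadj_wz2, hz21, hz22, hz23⟩ := hNwmem z2 hz2mem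
      have hdz11 : 1 ≤ G.degree z1 :=
        Finset.card_pos.mpr ⟨w, (SimpleGraph.mem_neighborFinset _ _ _).mpr hadj_wz1.symm⟩
      have hdz21 : 1 ≤ G.degree z2 :=
        Finset.card_pos.mpr ⟨w, (SimpleGraph.mem_neighborFinset _ _ _).mpr hadj_wz2.symm⟩
      have htz1le : (12 - G.degree z1) * m ≤ 11 * m := Nat.mul_le_mul_right m (by omega)
      have htz2le : (12 - G.degree z2) * m ≤ 11 * m := Nat.mul_le_mul_right m (by omega)
      have hP1' := hP1
      rw [hdw] at hP1'
      have hbi : ∀ gg : V → Finset (Fin M), Nw.biUnion gg = gg z1 ∪ gg z2 := by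
        intro gg
        rw [hNw2, Finset.biUnion_insert, Finset.singleton_biUnion]
      by_cases hu'Nw : u' ∈ Nw
      · -- u' is one of the two other neighbours
        have hadj_wu' : G.Adj w u' := (hNwmem u' hu'Nw).1
        have hdu'2 : 2 ≤ G.degree u' := by
          have hsub : ({u, w} : Finset V) ⊆ G.neighborFinset u' := by
            intro x hx
            simp only [Finset.mem_insert, Finset.mem_singleton] at hx
            rcases hx with rfl | rfl
            · exact (SimpleGraph.mem_neighborFinset _ _ _).mpr hadj_uu'.symm
            · exact (SimpleGraph.mem_neighborFinset _ _ _).mpr hadj_wu'.symm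
          have h2 := Finset.card_le_card hsub
          rw [Finset.card_pair hne_uw] at h2
          exact h2
        have htu'10 : (12 - G.degree u') * m ≤ 10 * m := Nat.mul_le_mul_right m (by omega)
        refine ⟨g0, hg0prop, hg0u', hg0v', ?_, ?_⟩
        · rw [hbi g0, hdw]
          have h1 := (hg0prop z1 hz11 hz12 hz13).2
          have h2 := (hg0prop z2 hz21 hz22 hz23).2
          have h3 := Finset.card_union_le (g0 z1) (g0 z2)
          omega
        · rw [hdw]
          have hss : (Su ∩ Sv) ∩ Nw.biUnion g0 ⊆ Su ∩ Sv := Finset.inter_subset_left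
          have := Finset.card_le_card hss
          omega
      by_cases hv'Nw : v' ∈ Nw
      · -- v' is one of the two other neighbours
        have hadj_wv' : G.Adj w v' := (hNwmem v' hv'Nw).1
        have hψv'2 : (12 - G.degree v') * m + 2 * m ≤ (ψ v').card := by
          refine hstep v' hv'u hv'v hv'w 2 ?_
          have hsub : ({v, w} : Finset V) ⊆ G.neighborFinset v' ∩ ({u, v, w} : Finset V) := by
            intro x hx
            simp only [Finset.mem_insert, Finset.mem_singleton] at hx
            rcases hx with rfl | rfl
            · exact Finset.mem_inter.mpr
                ⟨(SimpleGraph.mem_neighborFinset _ _ _).mpr hadj_vv'.symm, by simp⟩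
            · exact Finset.mem_inter.mpr
                ⟨(SimpleGraph.mem_neighborFinset _ _ _).mpr hadj_wv'.symm, by simp⟩
          have h2 := Finset.card_le_card hsub
          rw [Finset.card_pair hne_vw] at h2
          exact h2
        refine ⟨g0, hg0prop, hg0u', hg0v', ?_, ?_⟩
        · rw [hbi g0, hdw]
          have h1 := (hg0prop z1 hz11 hz12 hz13).2
          have h2 := (hg0prop z2 hz21 hz22 hz23).2
          have h3 := Finset.card_union_le (g0 z1) (g0 z2)
          omega
        · rw [hdw]
          have hss : (Su ∩ Sv) ∩ Nw.biUnion g0 ⊆ Su ∩ Sv := Finset.inter_subset_left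
          have := Finset.card_le_card hss
          omega
      · -- both other neighbours are generic
        have hz1u' : z1 ≠ u' := fun h => hu'Nw (h ▸ hz1mem)
        have hz2u' : z2 ≠ u' := fun h => hu'Nw (h ▸ hz2mem)
        have hz1v' : z1 ≠ v' := fun h => hv'Nw (h ▸ hz1mem)
        have hz2v' : z2 ≠ v' := fun h => hv'Nw (h ▸ hz2mem)
        obtain ⟨S1, hS1ψ, hS1card, hS1min⟩ :=
          exists_shrink_avoid_aux (ψ z1) (Su ∩ Sv) ((12 - G.degree z1) * m)
            (hty z1 hz11 hz12 hz13)
        set J : Finset (Fin M) := (Su ∩ Sv) \ S1 with hJdef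
        obtain ⟨S2, hS2ψ, hS2card, hS2min⟩ :=
          exists_shrink_avoid_aux (ψ z2) J ((12 - G.degree z2) * m)
            (hty z2 hz21 hz22 hz23)
        have hpsz1 : (ψ z1 \ (Su ∩ Sv)).card + (ψ z1 ∩ (Su ∩ Sv)).card = (ψ z1).card :=
          Finset.card_sdiff_add_card_inter _ _
        have hlez1 : (ψ z1 ∩ (Su ∩ Sv)).card ≤ (Su ∩ Sv).card :=
          Finset.card_le_card Finset.inter_subset_right
        have hψz11 : (12 - G.degree z1) * m + 1 * m ≤ (ψ z1).card := by
          refine hstep z1 hz11 hz12 hz13 1 ?_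
          refine Finset.card_pos.mpr ⟨w, Finset.mem_inter.mpr
            ⟨(SimpleGraph.mem_neighborFinset _ _ _).mpr hadj_wz1.symm, by simp⟩⟩
        have hpsz2 : (ψ z2 \ J).card + (ψ z2 ∩ J).card = (ψ z2).card :=
          Finset.card_sdiff_add_card_inter _ _
        have hlez2 : (ψ z2 ∩ J).card ≤ J.card :=
          Finset.card_le_card Finset.inter_subset_right
        have hψz21 : (12 - G.degree z2) * m + 1 * m ≤ (ψ z2).card := by
          refine hstep z2 hz21 hz22 hz23 1 ?_
          refine Finset.card_pos.mpr ⟨w, Finset.mem_inter.mpr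
            ⟨(SimpleGraph.mem_neighborFinset _ _ _).mpr hadj_wz2.symm, by simp⟩⟩
        have hJpart : J.card + ((Su ∩ Sv) ∩ S1).card = (Su ∩ Sv).card := by
          rw [hJdef]; exact Finset.card_sdiff_add_card_inter _ _
        have hJS2 : (J \ S2).card + (J ∩ S2).card = J.card :=
          Finset.card_sdiff_add_card_inter _ _
        have hcomm1 : ((Su ∩ Sv) ∩ S1).card = (S1 ∩ (Su ∩ Sv)).card := by
          rw [Finset.inter_comm]
        have hcomm2 : (J ∩ S2).card = (S2 ∩ J).card := by rw [Finset.inter_comm]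
        set g2 : V → Finset (Fin M) :=
          fun y => if y = z1 then S1 else if y = z2 then S2 else g0 y with hg2def
        have hg2z1 : g2 z1 = S1 := by simp [hg2def]
        have hg2z2 : g2 z2 = S2 := by
          simp [hg2def, hzz.symm]
        have hg2u' : g2 u' = Su := by
          simp [hg2def, hz1u'.symm, hz2u'.symm, hg0u']
        have hg2v' : g2 v' = Sv := by
          simp [hg2def, hz1v'.symm, hz2v'.symm, hg0v']
        have hg2prop : ∀ y, y ≠ u → y ≠ v → y ≠ w →
            g2 y ⊆ ψ y ∧ (g2 y).card = (12 - G.degree y) * m := by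
          intro y h1 h2 h3
          simp only [hg2def]
          by_cases hy1 : y = z1
          · subst hy1; rw [if_pos rfl]; exact ⟨hS1ψ, hS1card⟩
          rw [if_neg hy1]
          by_cases hy2 : y = z2
          · subst hy2; rw [if_pos rfl]; exact ⟨hS2ψ, hS2card⟩
          rw [if_neg hy2]; exact hg0prop y h1 h2 h3
        have hIpart : ((Su ∩ Sv) \ (S1 ∪ S2)).card + ((Su ∩ Sv) ∩ (S1 ∪ S2)).card
            = (Su ∩ Sv).card := Finset.card_sdiff_add_card_inter _ _
        have hIe : (Su ∩ Sv) \ (S1 ∪ S2) = J \ S2 := by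
          rw [hJdef]
          ext a
          simp only [Finset.mem_sdiff, Finset.mem_union]
          tauto
        refine ⟨g2, hg2prop, hg2u', hg2v', ?_, ?_⟩
        · rw [hbi g2, hg2z1, hg2z2, hdw]
          have h3 := Finset.card_union_le S1 S2
          omega
        · rw [hbi g2, hg2z1, hg2z2, hdw]
          rw [hIe] at hIpart
          omega
  obtain ⟨g, hg, hgu', hgv', hFb, hKeyb⟩ := key
  have hI7 : (Su ∩ Sv).card ≤ 7 * m := by omega
  obtain ⟨Sw, Au, Av, hSwcard, hAucard, hAvcard, hSwF, hAuAv, hAuSw, hAvSw, hAuSu, hAvSv⟩ :=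
    stage23_aux (α := Fin M) m ((12 - G.degree w) * m) (by rw [Fintype.card_fin, hm])
      Su Sv (Nw.biUnion g)
      (by rw [hSucard]; exact htu'le)
      (by rw [hSvcard]; exact htv'le)
      hI7
      (Nat.mul_le_mul_right m (by omega))
      (Nat.mul_le_mul_right m (by omega))
      hFb hKeyb
  set ψ'f : V → Finset (Fin M) :=
    fun y => if y = u then Au else if y = v then Av else if y = w then Sw else g y
    with hψ'def
  have hψ'u : ψ'f u = Au := by simp [hψ'def]
  have hψ'v : ψ'f v = Av := by simp [hψ'def, hne_uv.symm]
  have hψ'w : ψ'f w = Sw := by simp [hψ'def, hne_uw.symm, hne_vw.symm]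
  have hψ'out : ∀ y, y ≠ u → y ≠ v → y ≠ w → ψ'f y = g y := by
    intro y h1 h2 h3
    simp only [hψ'def]
    rw [if_neg h1, if_neg h2, if_neg h3]
  have hTset : ∀ y : V, y ≠ u → y ≠ v → y ≠ w → y ∉ ({u, v, w} : Set V) := by
    intro y h1 h2 h3
    simp only [Set.mem_insert_iff, Set.mem_singleton_iff]
    push_neg; exact ⟨h1, h2, h3⟩
  have hNu : ∀ z, G.Adj u z → z = v ∨ z = w ∨ z = u' := by
    intro z hz
    have hmem : z ∈ G.neighborFinset u := (SimpleGraph.mem_neighborFinset _ _ _).mpr hz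
    rw [hu'] at hmem; simpa using hmem
  have hNv : ∀ z, G.Adj v z → z = u ∨ z = w ∨ z = v' := by
    intro z hz
    have hmem : z ∈ G.neighborFinset v := (SimpleGraph.mem_neighborFinset _ _ _).mpr hz
    rw [hv'] at hmem; simpa using hmem
  have hNwz : ∀ z, G.Adj w z → z ≠ u → z ≠ v → z ∈ Nw := by
    intro z hz h1 h2
    rw [hNwdef, Finset.mem_sdiff]
    exact ⟨(SimpleGraph.mem_neighborFinset _ _ _).mpr hz, by simp [h1, h2]⟩
  refine ⟨ψ'f, ?_, ?_, ?_, ?_, ?_⟩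
  · intro y hy
    simp only [Set.mem_insert_iff, Set.mem_singleton_iff, not_or] at hy
    obtain ⟨h1, h2, h3⟩ := hy
    rw [hψ'out y h1 h2 h3, hdiv]
    exact hg y h1 h2 h3
  · rw [hψ'u, hAucard, hdiv]
  · rw [hψ'v, hAvcard, hdiv]
  · rw [hψ'w, hSwcard, hdiv]
  · intro y z hadj
    by_cases hyu : y = u
    · subst hyu
      rw [hψ'u]
      rcases hNu z hadj with rfl | rfl | h
      · rw [hψ'v]; exact hAuAv
      · rw [hψ'w]; exact hAuSw
      · rw [h, hψ'out u' hu'u hu'v hu'w, hgu']; exact hAuSu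
    by_cases hyv : y = v
    · subst hyv
      rw [hψ'v]
      rcases hNv z hadj with rfl | rfl | h
      · rw [hψ'u]; exact hAuAv.symm
      · rw [hψ'w]; exact hAvSw
      · rw [h, hψ'out v' hv'u hv'v hv'w, hgv']; exact hAvSv
    by_cases hyw : y = w
    · subst hyw
      rw [hψ'w]
      by_cases hzu : z = u
      · subst hzu; rw [hψ'u]; exact hAuSw.symm
      by_cases hzv : z = v
      · subst hzv; rw [hψ'v]; exact hAvSw.symm
      · have hzNw := hNwz z hadj hzu hzv
        obtain ⟨_, hz1, hz2, hz3⟩ := hNwmem z hzNw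
        rw [hψ'out z hz1 hz2 hz3]
        exact hSwF.mono_right (Finset.subset_biUnion_of_mem g hzNw)
    · rw [hψ'out y hyu hyv hyw]
      by_cases hzu : z = u
      · subst hzu
        rcases hNu y hadj.symm with h | h | h
        · exact absurd h hyv
        · exact absurd h hyw
        · subst h; rw [hψ'u, hgu']; exact hAuSu.symm
      by_cases hzv : z = v
      · subst hzv
        rcases hNv y hadj.symm with h | h | h
        · exact absurd h hyu
        · exact absurd h hyw
        · subst h; rw [hψ'v, hgv']; exact hAvSv.symm
      by_cases hzw : z = w
      · subst hzw
        have hyNw := hNwz y hadj.symm hyu hyv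
        rw [hψ'w]
        exact (hSwF.mono_right (Finset.subset_biUnion_of_mem g hyNw)).symm
      · rw [hψ'out z hzu hzv hzw]
        exact Finset.disjoint_of_subset_left (hg y hyu hyv hyw).1
          (Finset.disjoint_of_subset_right (hg z hzu hzv hzw).1
            (hdisj y z (hTset y hyu hyv hyw) (hTset z hzu hzv hzw) hadj))
end
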